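/- Let (X, Σ, μ, T) be an ergodic measure-preserving system and B a set of positive measure. Let F_B be the distribution function of the normalized hitting time μ(B)·V_B (defined μ-a.e. on X) and G_B(t) = ∫₀ᵗ (1 - F̃_B(s)) ds where F̃_B is the distribution function of the normalized return time. Then for every t ≥ 0, G_B(t) - μ(B) ≤ F_B(t) ≤ G_B(t). -/

import Mathlib

open MeasureTheory ProbabilityTheory
open scoped ENNReal

/-- The first hitting/return time `min{i > 0 : T^i x ∈ B}`. -/
noncomputable def returnTime {X : Type*} (T : X → X) (B : Set X) (x : X) : ℕ :=
  sInf {i | 0 < i ∧ T^[i] x ∈ B}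

/-- Distribution function `F̃_B` of the normalized return time `μ(B)·R_B` on `B`
with the conditional measure `μ_B`. -/
noncomputable def retDF {X : Type*} [MeasurableSpace X] (μ : Measure X) (T : X → X)
    (B : Set X) (t : ℝ) : ℝ :=
  ((ProbabilityTheory.cond μ B)
    {y | (μ B).toReal * (returnTime T B y : ℝ) ≤ t}).toReal

/-- Distribution function `F_B` of the normalized hitting time `μ(B)·V_B` on the
whole space. -/
noncomputable def hitDF {X : Type*} [MeasurableSpace X] (μ : Measure X) (T : X → X)
    (B : Set X) (t : ℝ) : ℝ :=
  (μ {x | (μ B).toReal * (returnTime T B x : ℝ) ≤ t}).toReal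

/-- `G_B(t) = ∫₀ᵗ (1 - F̃_B(s)) ds`. -/
noncomputable def GB {X : Type*} [MeasurableSpace X] (μ : Measure X) (T : X → X)
    (B : Set X) (t : ℝ) : ℝ :=
  ∫ s in (0 : ℝ)..t, (1 - retDF μ T B s)

section Aux

variable {X : Type*} [MeasurableSpace X]

/-- The set of points that do not enter `B` within the first `k` iterates. -/
def ekSet (T : X → X) (B : Set X) (k : ℕ) : Set X :=
  {x | ∀ i, 0 < i → i ≤ k → T^[i] x ∉ B}

/-- The set of points that never enter `B` under positive iterates. -/
def neverSet (T : X → X) (B : Set X) : Set X :=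
  {x | ∀ i, 0 < i → T^[i] x ∉ B}

lemma ekSet_eq (T : X → X) (B : Set X) (k : ℕ) :
    ekSet T B k = ⋂ i ∈ Set.Icc 1 k, T^[i] ⁻¹' Bᶜ := by
  ext x
  simp only [ekSet, Set.mem_setOf_eq, Set.mem_iInter, Set.mem_Icc, Set.mem_preimage,
    Set.mem_compl_iff, and_imp, Nat.lt_iff_add_one_le, Nat.one_le_iff_ne_zero]
  constructor
  · intro h i h1 h2; exact h i (by omega) h2
  · intro h i h1 h2; exact h i (by omega) h2

lemma measurableSet_ekSet {T : X → X} (hT : Measurable T) {B : Set X}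
    (hB : MeasurableSet B) (k : ℕ) : MeasurableSet (ekSet T B k) := by
  rw [ekSet_eq]
  exact MeasurableSet.biInter (Set.to_countable _) fun i _ => hT.iterate i hB.compl

lemma ekSet_zero (T : X → X) (B : Set X) : ekSet T B 0 = Set.univ := by
  ext x; simp only [ekSet, Set.mem_setOf_eq, Set.mem_univ, iff_true]
  intro i hi hik; omega

lemma ekSet_succ (T : X → X) (B : Set X) (k : ℕ) :
    ekSet T B (k + 1) = T ⁻¹' (ekSet T B k \ B) := by
  ext x
  simp only [ekSet, Set.mem_setOf_eq, Set.mem_preimage, Set.mem_diff]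
  constructor
  · intro h
    refine ⟨fun j hj hjk => ?_, ?_⟩
    · have := h (j + 1) (Nat.succ_pos j) (by omega)
      rwa [Function.iterate_succ_apply] at this
    · have := h 1 Nat.one_pos (by omega)
      simpa using this
  · rintro ⟨h1, h2⟩ i hi hik
    rcases Nat.exists_eq_succ_of_ne_zero hi.ne' with ⟨j, rfl⟩
    rw [Function.iterate_succ_apply]
    rcases Nat.eq_zero_or_pos j with rfl | hj
    · simpa using h2
    · exact h1 j hj (by omega)

lemma neverSet_subset_ekSet (T : X → X) (B : Set X) (k : ℕ) :
    neverSet T B ⊆ ekSet T B k := fun x hx i hi _ => hx i hi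

lemma measurableSet_neverSet {T : X → X} (hT : Measurable T) {B : Set X}
    (hB : MeasurableSet B) : MeasurableSet (neverSet T B) := by
  have : neverSet T B = ⋂ k, ekSet T B k := by
    ext x
    simp only [neverSet, Set.mem_setOf_eq, Set.mem_iInter, ekSet]
    exact ⟨fun h k i hi _ => h i hi, fun h i hi => h i i hi le_rfl⟩
  rw [this]
  exact MeasurableSet.iInter fun k => measurableSet_ekSet hT hB k

variable {μ : Measure X} [IsProbabilityMeasure μ] {T : X → X} {B : Set X}

lemma meas_ekSet_succ (hT : MeasurePreserving T μ μ) (hB : MeasurableSet B) (k : ℕ) :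
    μ (ekSet T B (k + 1)) + μ (B ∩ ekSet T B k) = μ (ekSet T B k) := by
  rw [ekSet_succ, hT.measure_preimage ((measurableSet_ekSet hT.measurable hB k).diff
    hB).nullMeasurableSet, Set.inter_comm]
  exact measure_diff_add_inter _ hB

lemma meas_ekSet_sum (hT : MeasurePreserving T μ μ) (hB : MeasurableSet B) (n : ℕ) :
    μ (ekSet T B n) + ∑ k ∈ Finset.range n, μ (B ∩ ekSet T B k) = 1 := by
  induction n with
  | zero => simp [ekSet_zero]
  | succ n ih =>
    rw [Finset.sum_range_succ]
    have h := meas_ekSet_succ hT hB n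
    calc μ (ekSet T B (n+1)) + (∑ k ∈ Finset.range n, μ (B ∩ ekSet T B k) + μ (B ∩ ekSet T B n))
        = (μ (ekSet T B (n+1)) + μ (B ∩ ekSet T B n)) + ∑ k ∈ Finset.range n, μ (B ∩ ekSet T B k) := by
          ring
      _ = μ (ekSet T B n) + ∑ k ∈ Finset.range n, μ (B ∩ ekSet T B k) := by rw [h]
      _ = 1 := ih

lemma meas_neverSet (hT : Ergodic T μ) (hB : MeasurableSet B) (hpos : 0 < μ B) :
    μ (neverSet T B) = 0 := by
  have hsub : neverSet T B ⊆ T ⁻¹' neverSet T B := by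
    intro x hx
    intro j hj
    rw [← Function.iterate_succ_apply]
    exact hx (j + 1) (Nat.succ_pos j)
  have hm := measurableSet_neverSet hT.measurable hB
  rcases hT.ae_empty_or_univ_of_ae_le_preimage hm.nullMeasurableSet
      (HasSubset.Subset.eventuallyLE hsub) with h | h
  · exact ae_eq_empty.mp h
  · exfalso
    have hdisj : T ⁻¹' B ⊆ (neverSet T B)ᶜ := by
      intro x hx hxN
      exact hxN 1 Nat.one_pos (by simpa using hx)
    have hc : μ (neverSet T B)ᶜ = 0 := by
      have := ae_eq_univ.mp h
      simpa using this
    have : μ (T ⁻¹' B) = 0 := measure_mono_null hdisj hc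
    rw [hT.toMeasurePreserving.measure_preimage hB.nullMeasurableSet] at this
    exact absurd this hpos.ne'

lemma returnTime_mem (x : X) (hx : x ∉ neverSet T B) :
    0 < returnTime T B x ∧ T^[returnTime T B x] x ∈ B := by
  have hne : {i | 0 < i ∧ T^[i] x ∈ B}.Nonempty := by
    by_contra hno
    rw [Set.not_nonempty_iff_eq_empty, Set.eq_empty_iff_forall_notMem] at hno
    exact hx fun i hi hiB => hno i ⟨hi, hiB⟩
  exact Nat.sInf_mem hne

lemma mem_ekSet_iff (x : X) (hx : x ∉ neverSet T B) (k : ℕ) :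
    x ∈ ekSet T B k ↔ k < returnTime T B x := by
  obtain ⟨hrt, hmem⟩ := returnTime_mem x hx
  constructor
  · intro h
    by_contra hlt
    push_neg at hlt
    exact h (returnTime T B x) hrt hlt hmem
  · intro h i hi hik hiB
    have : returnTime T B x ≤ i := Nat.sInf_le ⟨hi, hiB⟩
    omega

end Aux

/-- In an ergodic system, `G_B(t) - μ(B) ≤ F_B(t) ≤ G_B(t)` for every `t ≥ 0`. -/
theorem stmt7 {X : Type*} [MeasurableSpace X] (μ : Measure X) [IsProbabilityMeasure μ]
    (T : X → X) (hT : Ergodic T μ) (B : Set X) (hB : MeasurableSet B) (hpos : 0 < μ B) :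
    ∀ t : ℝ, 0 ≤ t →
      GB μ T B t - (μ B).toReal ≤ hitDF μ T B t ∧ hitDF μ T B t ≤ GB μ T B t := by
  set c : ℝ := (μ B).toReal with hc_def
  have hBfin : μ B ≠ ∞ := measure_ne_top μ B
  have hc : 0 < c := ENNReal.toReal_pos hpos.ne' hBfin
  have hN : μ (neverSet T B) = 0 := meas_neverSet hT hB hpos
  have hNae : ∀ᵐ x ∂μ, x ∉ neverSet T B := by
    rw [ae_iff]; simpa [not_not] using hN
  -- a.e. identification of the sublevel sets
  have key_ae : ∀ t : ℝ, 0 ≤ t →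
      {x | c * (returnTime T B x : ℝ) ≤ t} =ᵐ[μ] (ekSet T B ⌊t / c⌋₊)ᶜ := by
    intro t ht
    filter_upwards [hNae] with x hx
    have : (c * (returnTime T B x : ℝ) ≤ t) ↔ x ∈ (ekSet T B ⌊t / c⌋₊)ᶜ := by
      rw [Set.mem_compl_iff, mem_ekSet_iff x hx, not_lt]
      constructor
      · intro h
        have h' : (returnTime T B x : ℝ) * c ≤ t := by rw [mul_comm]; exact h
        exact Nat.le_floor ((le_div_iff₀ hc).mpr h')
      · intro h
        have h2 : (returnTime T B x : ℝ) ≤ t / c :=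
          (Nat.le_floor_iff (div_nonneg ht hc.le)).mp h
        have h3 := (le_div_iff₀ hc).mp h2
        rw [mul_comm]; exact h3
    exact eq_iff_iff.mpr this
  -- measure of the hitting sublevel set
  have hit_eq : ∀ t : ℝ, 0 ≤ t →
      hitDF μ T B t = 1 - (μ (ekSet T B ⌊t / c⌋₊)).toReal := by
    intro t ht
    have h1 : μ {x | c * (returnTime T B x : ℝ) ≤ t} = μ (ekSet T B ⌊t / c⌋₊)ᶜ :=
      measure_congr (key_ae t ht)
    rw [hitDF, h1, prob_compl_eq_one_sub (measurableSet_ekSet hT.measurable hB _),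
      ENNReal.toReal_sub_of_le prob_le_one ENNReal.one_ne_top]
    simp
  -- 1 - retDF formula
  have ret_eq : ∀ s : ℝ, 0 ≤ s →
      1 - retDF μ T B s = (μ (B ∩ ekSet T B ⌊s / c⌋₊)).toReal / c := by
    intro s hs
    set k := ⌊s / c⌋₊
    have hBE : μ (B ∩ {x | c * (returnTime T B x : ℝ) ≤ s}) = μ (B \ ekSet T B k) := by
      refine measure_congr ?_
      filter_upwards [key_ae s hs] with x hx
      have hx' : x ∈ {x | c * (returnTime T B x : ℝ) ≤ s} ↔ x ∈ (ekSet T B k)ᶜ :=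
        iff_of_eq hx
      show (x ∈ B ∩ {x | c * (returnTime T B x : ℝ) ≤ s}) = (x ∈ B \ ekSet T B k)
      rw [eq_iff_iff, Set.mem_inter_iff, Set.mem_diff]
      exact and_congr Iff.rfl (hx'.trans (Set.mem_compl_iff _ _))
    have hdiff : μ (B \ ekSet T B k) = μ B - μ (B ∩ ekSet T B k) := by
      have := measure_diff_add_inter (μ := μ) B (measurableSet_ekSet hT.measurable hB k)
      have hfin : μ (B ∩ ekSet T B k) ≠ ∞ := measure_ne_top _ _
      rw [← this]
      rw [ENNReal.add_sub_cancel_right hfin]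
    have hmle : μ (B ∩ ekSet T B k) ≤ μ B := measure_mono Set.inter_subset_left
    rw [retDF, cond_apply hB, hBE, hdiff,
      ENNReal.toReal_mul, ENNReal.toReal_sub_of_le hmle hBfin, ENNReal.toReal_inv]
    field_simp
    have hc0 : (μ B).toReal ≠ 0 := hc_def ▸ hc.ne'
    rw [hc_def]
    field_simp
    ring
  -- monotonicity of retDF, for integrability
  haveI : IsProbabilityMeasure (μ[|B]) := cond_isProbabilityMeasure hpos.ne'
  have hmono : Antitone (fun s => 1 - retDF μ T B s) := by
    intro s s' hss
    simp only [sub_le_sub_iff_left]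
    refine ENNReal.toReal_mono (measure_ne_top _ _) (measure_mono ?_)
    intro x hx
    exact le_trans hx hss
  intro t ht
  set n := ⌊t / c⌋₊ with hn_def
  have hnc : (n : ℝ) * c ≤ t := by
    have := Nat.floor_le (div_nonneg ht hc.le)
    calc (n : ℝ) * c ≤ (t / c) * c := by nlinarith
      _ = t := by field_simp
  have htc : t < ((n : ℝ) + 1) * c := by
    have := Nat.lt_floor_add_one (t / c)
    calc t = (t / c) * c := by field_simp
      _ < ((n : ℝ) + 1) * c := by push_cast; nlinarith
  -- value of 1 - retDF on intervals
  have floor_eq : ∀ (k : ℕ) (s : ℝ), (k : ℝ) * c ≤ s → s < ((k : ℝ) + 1) * c →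
      ⌊s / c⌋₊ = k := by
    intro k s h1 h2
    have hs0 : 0 ≤ s := le_trans (by positivity) h1
    rw [Nat.floor_eq_iff (by positivity)]
    constructor
    · rw [le_div_iff₀ hc]; linarith
    · rw [div_lt_iff₀ hc]; push_cast; linarith
  set g : ℝ → ℝ := fun s => 1 - retDF μ T B s with hg_def
  set m : ℕ → ℝ := fun k => (μ (B ∩ ekSet T B k)).toReal with hm_def
  -- integral over each full block
  have block : ∀ k : ℕ, ∫ s in ((k : ℝ) * c)..(((k : ℝ) + 1) * c), g s = m k := by
    intro k
    have hcong : ∀ᵐ s ∂(volume : Measure ℝ), s ∈ Set.uIoc ((k : ℝ) * c) (((k : ℝ) + 1) * c) →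
        g s = m k / c := by
      have hne : ∀ᵐ s ∂(volume : Measure ℝ), s ≠ ((k : ℝ) + 1) * c := by
        rw [ae_iff]
        have : {s : ℝ | ¬s ≠ ((k : ℝ) + 1) * c} = {((k : ℝ) + 1) * c} := by
          ext s; simp [not_not]
        rw [this]; exact measure_singleton _
      filter_upwards [hne] with s hsne hs
      rw [Set.uIoc_of_le (by nlinarith : (k : ℝ) * c ≤ ((k : ℝ) + 1) * c)] at hs
      have h1 : (k : ℝ) * c ≤ s := hs.1.le
      have h2 : s < ((k : ℝ) + 1) * c := lt_of_le_of_ne hs.2 hsne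
      have hs0 : 0 ≤ s := le_trans (by positivity) h1
      rw [hg_def]
      simp only
      rw [ret_eq s hs0, floor_eq k s h1 h2]
    rw [intervalIntegral.integral_congr_ae hcong, intervalIntegral.integral_const]
    have : ((k : ℝ) + 1) * c - (k : ℝ) * c = c := by ring
    rw [this, smul_eq_mul]
    field_simp
  -- integrability
  have hint : ∀ a b : ℝ, IntervalIntegrable g volume a b := fun a b =>
    hmono.intervalIntegrable
  -- integral up to n*c
  have sum_eq : ∫ s in (0 : ℝ)..((n : ℝ) * c), g s = ∑ k ∈ Finset.range n, m k := by
    have := intervalIntegral.sum_integral_adjacent_intervals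
      (a := fun k : ℕ => (k : ℝ) * c) (f := g) (μ := volume) (n := n)
      (fun k _ => hint _ _)
    simp only [Nat.cast_zero, zero_mul] at this
    rw [← this]
    refine Finset.sum_congr rfl fun k _ => ?_
    rw [← block k]
    norm_num
  have tail_eq : ∫ s in ((n : ℝ) * c)..t, g s = (t - (n : ℝ) * c) * (m n / c) := by
    have hcong : ∀ᵐ s ∂(volume : Measure ℝ), s ∈ Set.uIoc ((n : ℝ) * c) t →
        g s = m n / c := by
      refine Filter.Eventually.of_forall fun s hs => ?_
      rw [Set.uIoc_of_le hnc] at hs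
      have h1 : (n : ℝ) * c ≤ s := hs.1.le
      have h2 : s < ((n : ℝ) + 1) * c := lt_of_le_of_lt hs.2 htc
      have hs0 : 0 ≤ s := le_trans (by positivity) h1
      rw [hg_def]
      simp only
      rw [ret_eq s hs0, floor_eq n s h1 h2]
    rw [intervalIntegral.integral_congr_ae hcong, intervalIntegral.integral_const,
      smul_eq_mul]
  have hGB : GB μ T B t = (∑ k ∈ Finset.range n, m k) + (t - (n : ℝ) * c) * (m n / c) := by
    rw [GB, ← hg_def]
    rw [← intervalIntegral.integral_add_adjacent_intervals (b := (n : ℝ) * c)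
      (hint _ _) (hint _ _), sum_eq, tail_eq]
  -- ∑ m k = hitDF t
  have sum_m : ∑ k ∈ Finset.range n, m k = hitDF μ T B t := by
    have hsum := meas_ekSet_sum hT.toMeasurePreserving hB n
    have h1 : (μ (ekSet T B n)).toReal + ∑ k ∈ Finset.range n, m k = 1 := by
      have := congrArg ENNReal.toReal hsum
      rw [ENNReal.toReal_add (measure_ne_top _ _) (by
        exact (ENNReal.sum_lt_top.mpr fun k _ => (measure_lt_top μ _)).ne)] at this
      rw [ENNReal.toReal_sum (fun k _ => measure_ne_top _ _)] at this
      simpa using this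
    rw [hit_eq t ht, ← hn_def]
    linarith
  -- the error term bounds
  have hterm_nonneg : 0 ≤ (t - (n : ℝ) * c) * (m n / c) := by
    apply mul_nonneg (by linarith)
    apply div_nonneg _ hc.le
    exact ENNReal.toReal_nonneg
  have hterm_le : (t - (n : ℝ) * c) * (m n / c) ≤ c := by
    have h1 : t - (n : ℝ) * c ≤ c := by nlinarith
    have h2 : m n / c ≤ 1 := by
      rw [div_le_one hc]
      exact ENNReal.toReal_mono hBfin (measure_mono Set.inter_subset_left)
    calc (t - (n : ℝ) * c) * (m n / c) ≤ c * 1 :=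
          mul_le_mul h1 h2 (div_nonneg ENNReal.toReal_nonneg hc.le) hc.le
      _ = c := mul_one c
  constructor
  · rw [hGB, sum_m]; linarith
  · rw [hGB, sum_m]; linarith
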